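/- Assume every symmetric n×n matrix over K is diagonalizable over K, where n ≥ 2. Then K is formally real and Pythagorean. -/

import Mathlib

open Matrix
def IsDiagonalizable {K : Type*} [Field K] {m : Type*} [Fintype m] [DecidableEq m]
    (A : Matrix m m K) : Prop :=
  ∃ P : Matrix m m K, IsUnit P ∧ (P⁻¹ * A * P).IsDiag
def FormallyReal (K : Type*) [Field K] : Prop := ¬ IsSumSq (-1 : K)
def Pythagorean (K : Type*) [Field K] : Prop := ∀ a b : K, ∃ c : K, a ^ 2 + b ^ 2 = c ^ 2

section Helpers

variable {K : Type*} [Field K] {n : ℕ}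

def tworow (i0 i1 : Fin n) (p q r t : K) : Matrix (Fin n) (Fin n) K :=
  Matrix.of fun i j =>
    if i = i0 then (if j = i0 then p else if j = i1 then q else 0)
    else if i = i1 then (if j = i0 then r else if j = i1 then t else 0) else 0

lemma sum_pair_support {i0 i1 : Fin n} (hne : i0 ≠ i1) (f : Fin n → K)
    (hf : ∀ k, k ≠ i0 → k ≠ i1 → f k = 0) :
    ∑ k, f k = f i0 + f i1 := by
  rw [← Finset.sum_subset (Finset.subset_univ ({i0, i1} : Finset (Fin n)))
      (fun k _ hk => by
        simp only [Finset.mem_insert, Finset.mem_singleton, not_or] at hk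
        exact hf k hk.1 hk.2),
    Finset.sum_pair hne]

lemma tworow_mul {i0 i1 : Fin n} (hne : i0 ≠ i1) (p q r t : K)
    (M : Matrix (Fin n) (Fin n) K) :
    tworow i0 i1 p q r t * M =
      Matrix.of fun i j =>
        if i = i0 then p * M i0 j + q * M i1 j
        else if i = i1 then r * M i0 j + t * M i1 j else 0 := by
  ext i j
  rw [Matrix.mul_apply]
  rw [sum_pair_support hne _ (fun k hk0 hk1 => by simp [tworow, hk0, hk1])]
  simp only [tworow, Matrix.of_apply, hne, hne.symm, if_true, if_false, if_neg hne,
    if_neg hne.symm, if_pos rfl]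
  split_ifs <;> simp_all

lemma tworow_mul_tworow {i0 i1 : Fin n} (hne : i0 ≠ i1) (p q r t p' q' r' t' : K) :
    tworow i0 i1 p q r t * tworow i0 i1 p' q' r' t' =
      tworow i0 i1 (p*p'+q*r') (p*q'+q*t') (r*p'+t*r') (r*q'+t*t') := by
  rw [tworow_mul hne]
  ext i j
  simp only [Matrix.of_apply, tworow, if_neg hne, if_neg hne.symm, if_pos rfl]
  split_ifs <;> simp_all <;> ring

lemma tworow_isSymm {i0 i1 : Fin n} (p q t : K) :
    (tworow i0 i1 p q q t).IsSymm := by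
  ext i j
  simp only [Matrix.transpose_apply, tworow, Matrix.of_apply]
  split_ifs <;> simp_all

lemma smul_tworow {i0 i1 : Fin n} (s p q r t : K) :
    s • tworow i0 i1 p q r t = tworow i0 i1 (s*p) (s*q) (s*r) (s*t) := by
  ext i j
  simp only [Matrix.smul_apply, tworow, Matrix.of_apply, smul_eq_mul]
  split_ifs <;> ring

lemma diag_mul_apply' {D M : Matrix (Fin n) (Fin n) K} (hD : D.IsDiag) (i j : Fin n) :
    (D * M) i j = D i i * M i j := by
  rw [Matrix.mul_apply]
  exact Finset.sum_eq_single i (fun k _ hk => by rw [hD hk.symm, zero_mul])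
    (fun hi => absurd (Finset.mem_univ i) hi)

lemma conj_mul' {P : Matrix (Fin n) (Fin n) K} (hPP : P * P⁻¹ = 1)
    (M N : Matrix (Fin n) (Fin n) K) :
    (P⁻¹ * M * P) * (P⁻¹ * N * P) = P⁻¹ * (M * N) * P := by
  calc (P⁻¹ * M * P) * (P⁻¹ * N * P) = P⁻¹ * (M * ((P * P⁻¹) * (N * P))) := by
        simp only [Matrix.mul_assoc]
    _ = P⁻¹ * (M * N) * P := by rw [hPP]; simp only [Matrix.one_mul, Matrix.mul_assoc]

/-- Pythagorean part. -/
lemma pyth_of_diag (hn : 2 ≤ n)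
    (h : ∀ A : Matrix (Fin n) (Fin n) K, A.IsSymm → IsDiagonalizable A) :
    Pythagorean K := by
  intro a b
  set i0 : Fin n := ⟨0, by omega⟩
  set i1 : Fin n := ⟨1, by omega⟩
  have hne : i0 ≠ i1 := by simp [i0, i1, Fin.ext_iff]
  set s : K := a * a + b * b with hs
  set A : Matrix (Fin n) (Fin n) K := tworow i0 i1 a b b (-a) with hA
  obtain ⟨P, hP, hdiag⟩ := h A (tworow_isSymm a b (-a))
  have hPdet : IsUnit P.det := (Matrix.isUnit_iff_isUnit_det P).mp hP
  have hPP : P * P⁻¹ = 1 := Matrix.mul_nonsing_inv P hPdet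
  set D : Matrix (Fin n) (Fin n) K := P⁻¹ * A * P with hDdef
  have hA3 : A * A * A = s • A := by
    rw [hA, tworow_mul_tworow hne, tworow_mul_tworow hne, smul_tworow]
    congr 1 <;> ring
  have hD3 : D * D * D = s • D := by
    rw [hDdef, conj_mul' hPP, conj_mul' hPP, hA3, Matrix.mul_smul, Matrix.smul_mul]
  by_cases hex : ∃ i, D i i ≠ 0
  · obtain ⟨i, hi⟩ := hex
    have hDD : (D * D).IsDiag := fun i j hij => by
      show (D * D) i j = 0
      rw [diag_mul_apply' hdiag, hdiag hij, mul_zero]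
    have h1 : D i i * D i i * D i i = s * D i i := by
      have := congrFun (congrFun hD3 i) i
      rwa [diag_mul_apply' hDD, diag_mul_apply' hdiag,
        Matrix.smul_apply, smul_eq_mul] at this
    have hc : D i i * D i i = s := mul_right_cancel₀ hi h1
    exact ⟨D i i, by rw [pow_two, pow_two, pow_two, hc]⟩
  · push_neg at hex
    have hD0 : D = 0 := by
      ext i j
      by_cases hij : i = j
      · subst hij; exact hex i
      · exact hdiag hij
    have hA0 : A = 0 := by
      have hback : P * D * P⁻¹ = A := by
        rw [hDdef]
        calc P * (P⁻¹ * A * P) * P⁻¹ = (P * P⁻¹) * (A * (P * P⁻¹)) := by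
              simp only [Matrix.mul_assoc]
          _ = A := by rw [hPP]; simp
      rw [← hback, hD0]
      simp
    have ha : a = 0 := by
      have := congrFun (congrFun hA0 i0) i0
      simpa [hA, tworow] using this
    have hb : b = 0 := by
      have := congrFun (congrFun hA0 i0) i1
      simpa [hA, tworow, hne, hne.symm] using this
    exact ⟨0, by rw [ha, hb]; ring⟩


lemma formally_real_of_diag (hn : 2 ≤ n)
    (h : ∀ A : Matrix (Fin n) (Fin n) K, A.IsSymm → IsDiagonalizable A) :
    ¬ IsSumSq (-1 : K) := by
  intro hsum
  have hpy : Pythagorean K := pyth_of_diag hn h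
  -- every sum of squares is a square
  have hsq : ∀ s : K, IsSumSq s → ∃ c : K, s = c * c := by
    intro s hs
    induction hs with
    | zero => exact ⟨0, by ring⟩
    | @sq_add a S _ ih =>
      obtain ⟨d, hd⟩ := ih
      obtain ⟨e, he⟩ := hpy a d
      exact ⟨e, by rw [hd, ← pow_two, ← pow_two, ← pow_two, he]⟩
  obtain ⟨c, hc⟩ := hsq _ hsum
  set i0 : Fin n := ⟨0, by omega⟩
  set i1 : Fin n := ⟨1, by omega⟩
  have hne : i0 ≠ i1 := by simp [i0, i1, Fin.ext_iff]
  set N : Matrix (Fin n) (Fin n) K := tworow i0 i1 1 c c (-1) with hN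
  obtain ⟨P, hP, hdiag⟩ := h N (tworow_isSymm 1 c (-1))
  have hPdet : IsUnit P.det := (Matrix.isUnit_iff_isUnit_det P).mp hP
  have hPP : P * P⁻¹ = 1 := Matrix.mul_nonsing_inv P hPdet
  set D : Matrix (Fin n) (Fin n) K := P⁻¹ * N * P with hDdef
  have hN2 : N * N = 0 := by
    rw [hN, tworow_mul_tworow hne]
    have h1 : 1 * 1 + c * c = (0 : K) := by rw [← hc]; ring
    have h2 : 1 * c + c * (-1) = (0 : K) := by ring
    have h3 : c * 1 + (-1) * c = (0 : K) := by ring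
    have h4 : c * c + (-1) * (-1) = (0 : K) := by rw [← hc]; ring
    rw [h1, h2, h3, h4]
    ext i j
    simp only [tworow, Matrix.of_apply, Matrix.zero_apply]
    split_ifs <;> rfl
  have hD2 : D * D = 0 := by
    rw [hDdef, conj_mul' hPP, hN2, Matrix.mul_zero, Matrix.zero_mul]
  have hD0 : D = 0 := by
    ext i j
    by_cases hij : i = j
    · subst hij
      have := congrFun (congrFun hD2 i) i
      rw [diag_mul_apply' hdiag, Matrix.zero_apply] at this
      exact mul_self_eq_zero.mp this
    · exact hdiag hij
  have hN0 : N = 0 := by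
    have hback : P * D * P⁻¹ = N := by
      rw [hDdef]
      calc P * (P⁻¹ * N * P) * P⁻¹ = (P * P⁻¹) * (N * (P * P⁻¹)) := by
            simp only [Matrix.mul_assoc]
        _ = N := by rw [hPP]; simp
    rw [← hback, hD0]
    simp
  have : (1 : K) = 0 := by
    have := congrFun (congrFun hN0 i0) i0
    simpa [hN, tworow] using this
  exact one_ne_zero this

end Helpers

theorem stmt11 {K : Type*} [Field K] {n : ℕ} (hn : 2 ≤ n)
    (h : ∀ A : Matrix (Fin n) (Fin n) K, A.IsSymm → IsDiagonalizable A) :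
    FormallyReal K ∧ Pythagorean K := by
  exact ⟨formally_real_of_diag hn h, pyth_of_diag hn h⟩
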